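/- Let e := exp(1), and define γ₀(x) := eˣ − 1 for x ∈ ℝ and γ₁(x) := 2e √(1 − e^{x−1}) for x ≤ 1. Then the set { x ∈ ℝ : x ≤ 1 and γ₀(x) = γ₁(x) } consists of exactly one point, namely x* = log( 2√(e(2e−1)) − (2e−1) ); moreover 0 < 2√(e(2e−1)) − (2e−1) < e (so x* < 1) and the common value is γ₀(x*) = 2√(e(2e−1)) − 2e. -/

import Mathlib

/-- The value t* = 2√(e(2e−1)) − (2e−1); the unique intersection point is x* = log t*. -/
noncomputable def tstar : ℝ :=
  2 * Real.sqrt (Real.exp 1 * (2 * Real.exp 1 - 1)) - (2 * Real.exp 1 - 1)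

/-- with γ₀(x) = eˣ − 1 and γ₁(x) = 2e√(1 − e^{x−1}) (for x ≤ 1), the set of
points x ≤ 1 with γ₀(x) = γ₁(x) is exactly {log t*}, where 0 < t* < e (so log t* < 1), and
the common value is γ₀(log t*) = 2√(e(2e−1)) − 2e. -/
theorem stmt_18 :
    {x : ℝ | x ≤ 1 ∧ Real.exp x - 1 = 2 * Real.exp 1 * Real.sqrt (1 - Real.exp (x - 1))}
        = {Real.log tstar} ∧
    (0 < tstar ∧ tstar < Real.exp 1) ∧
    Real.exp (Real.log tstar) - 1
        = 2 * Real.sqrt (Real.exp 1 * (2 * Real.exp 1 - 1)) - 2 * Real.exp 1 := by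
  set e : ℝ := Real.exp 1 with he_def
  set s : ℝ := Real.sqrt (e * (2 * e - 1)) with hs_def
  have he2 : (2 : ℝ) < e := by
    have := Real.add_one_lt_exp (x := 1) one_ne_zero
    linarith
  have hs0 : 0 ≤ s := Real.sqrt_nonneg _
  have hs2 : s ^ 2 = 2 * e ^ 2 - e := by
    rw [hs_def, Real.sq_sqrt (by nlinarith)]
    ring
  have htdef : tstar = 2 * s - (2 * e - 1) := rfl
  have htpos : 0 < tstar := by
    rw [htdef]; nlinarith [hs2, hs0, he2]
  have htlt : tstar < e := by
    rw [htdef]; nlinarith [hs2, hs0, he2, sq_nonneg (e - 1)]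
  have ht1 : 1 ≤ tstar := by
    rw [htdef]; nlinarith [hs2, hs0, he2]
  -- the quadratic identity satisfied by tstar
  have hquadt : (tstar - 1) ^ 2 = 4 * e ^ 2 - 4 * e * tstar := by
    rw [htdef]; linear_combination 4 * hs2
  refine ⟨?_, ⟨htpos, htlt⟩, ?_⟩
  · ext x
    simp only [Set.mem_setOf_eq, Set.mem_singleton_iff]
    constructor
    · rintro ⟨hx1, hx⟩
      set T : ℝ := Real.exp x with hT_def
      have hTpos : 0 < T := Real.exp_pos x
      have hexp : Real.exp (x - 1) = T / e := by
        rw [Real.exp_sub]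
      have harg : 0 ≤ 1 - Real.exp (x - 1) := by
        have : Real.exp (x - 1) ≤ 1 := Real.exp_le_one_iff.mpr (by linarith)
        linarith
      have hu0 : 0 ≤ Real.sqrt (1 - Real.exp (x - 1)) := Real.sqrt_nonneg _
      have hu2 : (Real.sqrt (1 - Real.exp (x - 1))) ^ 2 = 1 - T / e := by
        rw [Real.sq_sqrt harg, hexp]
      -- T - 1 = 2 e u ≥ 0, square both sides
      have hT1 : 1 ≤ T := by nlinarith
      have hquad : (T - 1) ^ 2 = 4 * e ^ 2 - 4 * e * T := by
        have h1 : (T - 1) ^ 2 = (2 * e) ^ 2 * (1 - T / e) := by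
          rw [hx, ← hu2]; ring
        have hene : e ≠ 0 := by positivity
        field_simp at h1
        nlinarith [h1]
      have hzero : (T - tstar) * (T + 2 * s + 2 * e - 1) = 0 := by
        rw [htdef]; linear_combination hquad - 4 * hs2
      have hfac : 0 < T + 2 * s + 2 * e - 1 := by nlinarith
      have hTt : T = tstar := by
        rcases mul_eq_zero.mp hzero with h | h
        · linarith
        · linarith
      rw [← hTt, hT_def, Real.log_exp]
    · rintro rfl
      have hexpl : Real.exp (Real.log tstar) = tstar := Real.exp_log htpos
      constructor
      · calc Real.log tstar ≤ Real.log e := Real.log_le_log htpos htlt.le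
          _ = 1 := Real.log_exp 1
      · have hexp1 : Real.exp (Real.log tstar - 1) = tstar / e := by
          rw [Real.exp_sub, hexpl]
        have hene : (0:ℝ) < e := by linarith
        have harg : 1 - tstar / e = ((tstar - 1) / (2 * e)) ^ 2 := by
          field_simp
          linear_combination (-1) * hquadt
        rw [hexpl, hexp1, harg, Real.sqrt_sq (div_nonneg (by linarith) (by linarith))]
        field_simp
  · rw [Real.exp_log htpos, htdef]; ring
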